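/- Let g be a Lie algebra with invariant t ∈ (S²g)^g and let c ⊂ g be a coisotropic Lie subalgebra with corresponding element t̄ = 0 in S²(g/c). Let M be a g-module and A a commutative algebra with g-action by derivations whose 'stabilizer condition' holds in the following algebraic form: for every algebra character (point evaluation) χ : A → k, the set of ξ ∈ g acting at χ by zero (i.e., χ(ξ·a) = 0 for all a) is a coisotropic subalgebra. Then m ∘ (t ·) = 0 on A ⊗ A, i.e., A is quasi-Poisson-commutative. -/

import Mathlib

open TensorProduct

variable {k : Type*} [Field k] {g : Type*} [LieRing g] [LieAlgebra k g]
variable {A : Type*} [CommRing A] [Algebra k A]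

/-- The action of an element of `g ⊗ g` on `A ⊗ A` via the two tensor legs. -/
noncomputable def twoLeg (ρ : g →ₗ[k] Module.End k A) :
    g ⊗[k] g →ₗ[k] Module.End k (A ⊗[k] A) :=
  TensorProduct.lift (((TensorProduct.mapBilinear (RingHom.id k) A A A A).comp ρ).compl₂ ρ)

/-- The stabilizer subspace `s_χ = {ξ ∈ g : χ(ξ·a) = 0 for all a}` of a character
(point evaluation) `χ : A → k`. -/
noncomputable def stabilizer (ρ : g →ₗ[k] Module.End k A) (χ : A →ₐ[k] k) :
    Submodule k g where
  carrier := {ξ | ∀ a : A, χ (ρ ξ a) = 0}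
  add_mem' := by
    intro x y hx hy a
    simp [map_add, LinearMap.add_apply, hx a, hy a]
  zero_mem' := by
    intro a
    simp
  smul_mem' := by
    intro c x hx a
    simp [map_smul, LinearMap.smul_apply, hx a]


/-- In a reduced finite type algebra over an algebraically closed field, an element
killed by all characters is zero. -/
theorem char_sep {k : Type*} [Field k] [IsAlgClosed k]
    {A : Type*} [CommRing A] [Algebra k A] [Algebra.FiniteType k A] [IsReduced A]
    (x : A) (h : ∀ χ : A →ₐ[k] k, χ x = 0) : x = 0 := by
  haveI hJ : IsJacobsonRing A := isJacobsonRing_of_finiteType (A := k)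
  have hx : x ∈ (⊥ : Ideal A).jacobson := by
    rw [Ideal.jacobson]
    rw [Ideal.mem_sInf]
    rintro m ⟨-, hm⟩
    haveI := hm
    letI : Field (A ⧸ m) := Ideal.Quotient.field m
    haveI : Algebra.FiniteType k (A ⧸ m) :=
      Algebra.FiniteType.of_surjective (Ideal.Quotient.mkₐ k m)
        (Ideal.Quotient.mkₐ_surjective k m)
    haveI : Module.Finite k (A ⧸ m) := finite_of_finite_type_of_isJacobsonRing k _
    haveI : Algebra.IsIntegral k (A ⧸ m) := Algebra.IsIntegral.of_finite k _
    have hsurj : Function.Surjective (algebraMap k (A ⧸ m)) :=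
      IsAlgClosed.algebraMap_bijective_of_isIntegral.2
    have hbij : Function.Bijective (Algebra.ofId k (A ⧸ m)) :=
      ⟨(algebraMap k (A ⧸ m)).injective, hsurj⟩
    let e := AlgEquiv.ofBijective (Algebra.ofId k (A ⧸ m)) hbij
    have h0 := h (e.symm.toAlgHom.comp (Ideal.Quotient.mkₐ k m))
    simp only [AlgHom.comp_apply, Ideal.Quotient.mkₐ_eq_mk] at h0
    have : Ideal.Quotient.mk m x = 0 := by
      have := congrArg e h0
      simpa using this
    exact Ideal.Quotient.eq_zero_iff_mem.mp this
  have hrad : (⊥ : Ideal A).IsRadical := by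
    have h1 := Ideal.radical_isRadical (⊥ : Ideal A)
    have h2 : (⊥ : Ideal A).radical = ⊥ := by
      simpa [nilradical] using nilradical_eq_zero A
    rwa [h2] at h1
  rwa [hJ.out hrad, Ideal.mem_bot] at hx

/-- let `A` be a reduced finitely generated commutative algebra over an
algebraically closed field `k` of characteristic `0`, acted on by `g` by derivations,
such that for every character `χ : A → k` the stabilizer `s_χ` is coisotropic, in the
algebraic form `t ∈ s_χ ⊗ g + g ⊗ s_χ`.  Then `m ∘ (t·) = 0` on `A ⊗ A`, i.e. `A` is
quasi-Poisson-commutative. -/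
theorem statement_18 [CharZero k] [IsAlgClosed k] [Algebra.FiniteType k A] [IsReduced A]
    (ρ : g →ₗ[k] Module.End k A)
    (hder : ∀ (x : g) (a b : A), ρ x (a * b) = ρ x a * b + a * ρ x b)
    (hlie : ∀ x y : g, ρ ⁅x, y⁆ = ρ x * ρ y - ρ y * ρ x)
    (t : g ⊗[k] g)
    (hsymm : TensorProduct.comm k g g t = t)
    (hinv : ∀ x : g, ⁅x, t⁆ = 0)
    (hstab : ∀ χ : A →ₐ[k] k,
      t ∈ LinearMap.range
            (TensorProduct.map (stabilizer ρ χ).subtype (LinearMap.id : g →ₗ[k] g))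
          ⊔ LinearMap.range
            (TensorProduct.map (LinearMap.id : g →ₗ[k] g) (stabilizer ρ χ).subtype)) :
    (LinearMap.mul' k A) ∘ₗ twoLeg ρ t = 0 := by
  apply TensorProduct.ext'
  intro a b
  rw [LinearMap.comp_apply, LinearMap.zero_apply]
  apply char_sep (k := k)
  intro χ
  set f : g →ₗ[k] k := χ.toLinearMap ∘ₗ ρ.flip a with hf
  set f' : g →ₗ[k] k := χ.toLinearMap ∘ₗ ρ.flip b with hf'
  set L : g ⊗[k] g →ₗ[k] k := (LinearMap.mul' k k) ∘ₗ TensorProduct.map f f' with hL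
  have key : ∀ s : g ⊗[k] g, χ (LinearMap.mul' k A (twoLeg ρ s (a ⊗ₜ[k] b))) = L s := by
    intro s
    induction s using TensorProduct.induction_on with
    | zero => simp
    | tmul ξ η =>
      simp [twoLeg, hL, hf, hf', TensorProduct.mapBilinear_apply, map_mul]
    | add x y hx hy => simp [map_add, hx, hy]
  rw [key t]
  have h1 : L ∘ₗ TensorProduct.map (stabilizer ρ χ).subtype (LinearMap.id : g →ₗ[k] g) = 0 := by
    apply TensorProduct.ext'
    rintro ⟨ξ, hξ⟩ η
    have : f ξ = 0 := hξ a
    simp [hL, this]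
  have h2 : L ∘ₗ TensorProduct.map (LinearMap.id : g →ₗ[k] g) (stabilizer ρ χ).subtype = 0 := by
    apply TensorProduct.ext'
    rintro ξ ⟨η, hη⟩
    have : f' η = 0 := hη b
    simp [hL, this]
  obtain ⟨u, hu, v, hv, huv⟩ := Submodule.mem_sup.mp (hstab χ)
  obtain ⟨u', rfl⟩ := hu
  obtain ⟨v', rfl⟩ := hv
  rw [← huv, map_add, ← LinearMap.comp_apply, ← LinearMap.comp_apply, h1, h2]
  simp
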